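/- Let F₀ be a vector space of functions (e.g., functions holomorphic on ℂ ∖ (-∞,0]) carrying a right action |_s of the semigroup G⁺ (matrices [[a,b],[c,d]] with integer entries, positive determinant, b,d ≥ 0, and either a > 0 or a = 0, b > 0). Suppose ψ ∈ F₀ satisfies ψ|_s I = ψ|_s T + ψ|_s T', where T = [[1,1],[0,1]] and T' = [[1,0],[1,1]]. Define μ̃ on left primitive segments by μ̃(g⁻¹·∞, g⁻¹·0) := ψ|_s g for g ∈ S (the SL(2,ℤ)-matrices with nonnegative entries). Then whenever three left primitive segments satisfy (α,γ) = (α,β) ∪ (β,γ), one has μ̃(α,β) + μ̃(β,γ) = μ̃(α,γ). -/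

import Mathlib

/-- Fractional linear action of an integer 2×2 matrix on `P¹(ℚ) = ℚ ∪ {∞}`,
with `∞` encoded as `none`. -/
def flin (h : Matrix (Fin 2) (Fin 2) ℤ) : Option ℚ → Option ℚ
  | none => if (h 1 0 : ℚ) = 0 then none else some ((h 0 0 : ℚ) / (h 1 0 : ℚ))
  | some x => if (h 1 0 : ℚ) * x + (h 1 1 : ℚ) = 0 then none
      else some (((h 0 0 : ℚ) * x + (h 0 1 : ℚ)) / ((h 1 0 : ℚ) * x + (h 1 1 : ℚ)))

/-- The semigroup `G⁺`: integer matrices with positive determinant,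
`b, d ≥ 0`, and either `a > 0`, or `a = 0` and `b > 0`. -/
def Gplus : Set (Matrix (Fin 2) (Fin 2) ℤ) :=
  {g | 0 < g.det ∧ 0 ≤ g 0 1 ∧ 0 ≤ g 1 1 ∧ (0 < g 0 0 ∨ (g 0 0 = 0 ∧ 0 < g 0 1))}

def Tmat : Matrix (Fin 2) (Fin 2) ℤ := !![1, 1; 0, 1]

def Tmat' : Matrix (Fin 2) (Fin 2) ℤ := !![1, 0; 1, 1]

lemma pair_unique (p q r s : ℤ) (hp : 0 ≤ p) (hq : 0 ≤ q) (hr : 0 ≤ r) (hs : 0 ≤ s)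
    (h1 : IsCoprime p q) (h2 : IsCoprime r s) (h : p * s = r * q) : p = r ∧ q = s := by
  have hpr : p = r := by
    apply Int.dvd_antisymm hp hr
    · exact h1.dvd_of_dvd_mul_right (h ▸ dvd_mul_right p s)
    · exact h2.dvd_of_dvd_mul_right (h ▸ dvd_mul_right r q)
  subst hpr
  rcases eq_or_ne p 0 with h0 | h0
  · subst h0
    have hu1 := Int.isUnit_iff.mp (isCoprime_zero_left.mp h1)
    have hu2 := Int.isUnit_iff.mp (isCoprime_zero_left.mp h2)
    refine ⟨rfl, ?_⟩
    rcases hu1 with h | h <;> rcases hu2 with h' | h' <;> omega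
  · exact ⟨rfl, (mul_left_cancel₀ h0 h).symm⟩

/-- let `F₀` be a complex vector space with a right action `act`
of `G⁺` (additive in the function argument, associative on `G⁺`), and let
`ψ ∈ F₀` satisfy the three-term relation `ψ|I = ψ|T + ψ|T'`.  Define `μ̃` on
left primitive segments by `μ̃(g⁻¹∞, g⁻¹0) = ψ|g` for `g ∈ S` (nonnegative
`SL(2,ℤ)`-matrices).  If three left primitive segments satisfy
`(α,γ) = (α,β) ∪ (β,γ)`, then `μ̃(α,β) + μ̃(β,γ) = μ̃(α,γ)`. -/
theorem stmt12 {F₀ : Type*} [AddCommGroup F₀] [Module ℂ F₀]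
    (act : F₀ → Matrix (Fin 2) (Fin 2) ℤ → F₀)
    (hassoc : ∀ (f : F₀) (g₁ g₂ : Matrix (Fin 2) (Fin 2) ℤ),
      g₁ ∈ Gplus → g₂ ∈ Gplus → act f (g₁ * g₂) = act (act f g₁) g₂)
    (hadd : ∀ (f₁ f₂ : F₀) (g : Matrix (Fin 2) (Fin 2) ℤ), g ∈ Gplus →
      act (f₁ + f₂) g = act f₁ g + act f₂ g)
    (ψ : F₀) (hψ : act ψ 1 = act ψ Tmat + act ψ Tmat')
    (hψI : act ψ 1 = ψ)
    (g₁ g₂ g₃ : Matrix.SpecialLinearGroup (Fin 2) ℤ)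
    (hg₁ : ∀ i j, 0 ≤ g₁.1 i j) (hg₂ : ∀ i j, 0 ≤ g₂.1 i j)
    (hg₃ : ∀ i j, 0 ≤ g₃.1 i j)
    -- the segments `(α,β)`, `(β,γ)`, `(α,γ)` associated to `g₁, g₂, g₃`
    -- satisfy `(α,γ) = (α,β) ∪ (β,γ)`:
    (hα : flin (g₁⁻¹).1 none = flin (g₃⁻¹).1 none)
    (hβ : flin (g₁⁻¹).1 (some 0) = flin (g₂⁻¹).1 none)
    (hγ : flin (g₂⁻¹).1 (some 0) = flin (g₃⁻¹).1 (some 0)) :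
    act ψ g₁.1 + act ψ g₂.1 = act ψ g₃.1 := by
  have det1 : g₁.1 0 0 * g₁.1 1 1 - g₁.1 0 1 * g₁.1 1 0 = 1 := by
    have := g₁.2; rwa [Matrix.det_fin_two] at this
  have det2 : g₂.1 0 0 * g₂.1 1 1 - g₂.1 0 1 * g₂.1 1 0 = 1 := by
    have := g₂.2; rwa [Matrix.det_fin_two] at this
  have det3 : g₃.1 0 0 * g₃.1 1 1 - g₃.1 0 1 * g₃.1 1 0 = 1 := by
    have := g₃.2; rwa [Matrix.det_fin_two] at this
  have ha1 : 0 < g₁.1 0 0 := by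
    nlinarith [mul_nonneg (hg₁ 0 1) (hg₁ 1 0), hg₁ 0 0, hg₁ 1 1]
  have ha2 : 0 < g₂.1 0 0 := by
    nlinarith [mul_nonneg (hg₂ 0 1) (hg₂ 1 0), hg₂ 0 0, hg₂ 1 1]
  have ha3 : 0 < g₃.1 0 0 := by
    nlinarith [mul_nonneg (hg₃ 0 1) (hg₃ 1 0), hg₃ 0 0, hg₃ 1 1]
  simp only [flin, Matrix.SpecialLinearGroup.coe_inv, Matrix.adjugate_fin_two,
    Matrix.cons_val', Matrix.cons_val_zero, Matrix.empty_val', Matrix.cons_val_fin_one,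
    Matrix.cons_val_one, Matrix.head_cons, Matrix.head_fin_const, Matrix.of_apply,
    Int.cast_neg, neg_eq_zero, Int.cast_eq_zero, mul_zero, zero_add] at hα hβ hγ
  -- coprimality of rows
  have cb1 : IsCoprime (g₁.1 1 0) (g₁.1 1 1) := ⟨-(g₁.1 0 1), g₁.1 0 0, by linarith⟩
  have cb3 : IsCoprime (g₃.1 1 0) (g₃.1 1 1) := ⟨-(g₃.1 0 1), g₃.1 0 0, by linarith⟩
  have ct1 : IsCoprime (g₁.1 0 0) (g₁.1 0 1) := ⟨g₁.1 1 1, -(g₁.1 1 0), by linarith⟩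
  have ct2 : IsCoprime (g₂.1 0 0) (g₂.1 0 1) := ⟨g₂.1 1 1, -(g₂.1 1 0), by linarith⟩
  have ct3 : IsCoprime (g₃.1 0 0) (g₃.1 0 1) := ⟨g₃.1 1 1, -(g₃.1 1 0), by linarith⟩
  have cb2 : IsCoprime (g₂.1 1 0) (g₂.1 1 1) := ⟨-(g₂.1 0 1), g₂.1 0 0, by linarith⟩
  -- cross equalities
  have hcross1 : g₁.1 1 0 * g₃.1 1 1 = g₃.1 1 0 * g₁.1 1 1 := by
    by_cases hc1 : g₁.1 1 0 = 0
    · have hc3 : g₃.1 1 0 = 0 := by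
        by_contra h; rw [if_pos hc1, if_neg h] at hα; exact nomatch hα
      rw [hc1, hc3]; ring
    · have hc3 : g₃.1 1 0 ≠ 0 := by
        intro h; rw [if_pos h, if_neg hc1] at hα; exact nomatch hα
      rw [if_neg hc1, if_neg hc3] at hα
      have h := Option.some.inj hα
      have hq1 : (g₁.1 1 0 : ℚ) ≠ 0 := Int.cast_ne_zero.mpr hc1
      have hq3 : (g₃.1 1 0 : ℚ) ≠ 0 := Int.cast_ne_zero.mpr hc3
      rw [div_eq_div_iff (neg_ne_zero.mpr hq1) (neg_ne_zero.mpr hq3)] at h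
      have : (g₁.1 1 0 : ℚ) * g₃.1 1 1 = g₃.1 1 0 * g₁.1 1 1 := by linear_combination h
      exact_mod_cast this
  have hcross2 : g₂.1 1 0 * g₁.1 0 1 = g₁.1 0 0 * g₂.1 1 1 := by
    have hc1 : g₁.1 0 0 ≠ 0 := ha1.ne'
    have hc2 : g₂.1 1 0 ≠ 0 := by
      intro h; rw [if_pos h, if_neg hc1] at hβ; exact nomatch hβ
    rw [if_neg hc1, if_neg hc2] at hβ
    have h := Option.some.inj hβ
    have hq1 : (g₁.1 0 0 : ℚ) ≠ 0 := Int.cast_ne_zero.mpr hc1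
    have hq2 : (g₂.1 1 0 : ℚ) ≠ 0 := Int.cast_ne_zero.mpr hc2
    rw [div_eq_div_iff hq1 (neg_ne_zero.mpr hq2)] at h
    have : (g₂.1 1 0 : ℚ) * g₁.1 0 1 = g₁.1 0 0 * g₂.1 1 1 := by linear_combination h
    exact_mod_cast this
  have hcross3 : g₂.1 0 0 * g₃.1 0 1 = g₃.1 0 0 * g₂.1 0 1 := by
    rw [if_neg ha2.ne', if_neg ha3.ne'] at hγ
    have h := Option.some.inj hγ
    have hq2 : (g₂.1 0 0 : ℚ) ≠ 0 := Int.cast_ne_zero.mpr ha2.ne'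
    have hq3 : (g₃.1 0 0 : ℚ) ≠ 0 := Int.cast_ne_zero.mpr ha3.ne'
    rw [div_eq_div_iff hq2 hq3] at h
    have : (g₂.1 0 0 : ℚ) * g₃.1 0 1 = g₃.1 0 0 * g₂.1 0 1 := by linear_combination h
    exact_mod_cast this
  obtain ⟨e1, e2⟩ := pair_unique _ _ _ _ (hg₁ 1 0) (hg₁ 1 1) (hg₃ 1 0) (hg₃ 1 1) cb1 cb3 hcross1
  obtain ⟨e3, e4⟩ := pair_unique _ _ _ _ (hg₂ 1 0) (hg₂ 1 1) (hg₁ 0 0) (hg₁ 0 1) cb2 ct1 hcross2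
  obtain ⟨e5, e6⟩ := pair_unique _ _ _ _ (hg₂ 0 0) (hg₂ 0 1) (hg₃ 0 0) (hg₃ 0 1) ct2 ct3 hcross3
  -- solve for the top row of g₁
  have eq1 : g₁.1 0 0 * g₃.1 1 1 - g₁.1 0 1 * g₃.1 1 0 = 1 := by rw [← e1, ← e2]; exact det1
  have eq2 : g₃.1 0 0 * g₁.1 0 1 - g₃.1 0 1 * g₁.1 0 0 = 1 := by
    rw [← e3, ← e4, ← e5, ← e6]; exact det2
  have f1 : g₁.1 0 0 = g₃.1 0 0 + g₃.1 1 0 := by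
    linear_combination g₃.1 0 0 * eq1 + g₃.1 1 0 * eq2 - g₁.1 0 0 * det3
  have f2 : g₁.1 0 1 = g₃.1 0 1 + g₃.1 1 1 := by
    linear_combination g₃.1 0 1 * eq1 + g₃.1 1 1 * eq2 - g₁.1 0 1 * det3
  -- the matrix identities
  have hg1eq : g₁.1 = Tmat * g₃.1 := by
    ext i j
    fin_cases i <;> fin_cases j <;>
      simp [Tmat, Matrix.mul_apply, Fin.sum_univ_two] <;> omega
  have hg2eq : g₂.1 = Tmat' * g₃.1 := by
    ext i j
    fin_cases i <;> fin_cases j <;>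
      simp [Tmat', Matrix.mul_apply, Fin.sum_univ_two] <;> omega
  -- memberships
  have hT : Tmat ∈ Gplus := by
    constructor
    · simp [Tmat, Matrix.det_fin_two]
    · refine ⟨by norm_num [Tmat], by norm_num [Tmat], Or.inl (by norm_num [Tmat])⟩
  have hT' : Tmat' ∈ Gplus := by
    constructor
    · simp [Tmat', Matrix.det_fin_two]
    · refine ⟨by norm_num [Tmat'], by norm_num [Tmat'], Or.inl (by norm_num [Tmat'])⟩
  have hG3 : g₃.1 ∈ Gplus := ⟨by rw [g₃.2]; norm_num, hg₃ 0 1, hg₃ 1 1, Or.inl ha3⟩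
  calc act ψ g₁.1 + act ψ g₂.1
      = act (act ψ Tmat) g₃.1 + act (act ψ Tmat') g₃.1 := by
        rw [hg1eq, hg2eq, hassoc ψ Tmat g₃.1 hT hG3, hassoc ψ Tmat' g₃.1 hT' hG3]
    _ = act (act ψ Tmat + act ψ Tmat') g₃.1 := (hadd _ _ _ hG3).symm
    _ = act (act ψ 1) g₃.1 := by rw [← hψ]
    _ = act ψ g₃.1 := by rw [hψI]
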